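/- For each node v and each K ∈ {A,B}, let r_K(v) be the least nonnegative integer r such that d_K(s_K, v) ≤ 2^r, and define T'(v) := max{ 2^{r_A(v)}, 2^{r_B(v)} }. If v_ρ is a node minimizing T' over V, then T_RV(v_ρ) ≤ 2 · min over all u ∈ V of T_RV(u). (This is the correctness core of the rendezvous algorithm with communication complexity O(n log log(Mn)): the node v_ρ computed by both agents from the exchanged exponents r_K(v) satisfies T_RV(v_ρ) ≤ 2·T_RV(u) for the rendezvous node u.) -/

import Mathlib

open SimpleGraph

/-- The weighted shortest-path distance from `u` to `v` in `G` with edge weights `w`: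
the infimum, over all walks from `u` to `v`, of the sum of the weights of traversed edges. -/
noncomputable def wdistN {V : Type*} (G : SimpleGraph V) (w : Sym2 V → ℕ) (u v : V) : ℕ :=
  sInf (Set.range fun p : G.Walk u v => (p.edges.map w).sum)

/-- `r_K(v)`: the least nonnegative integer `r` such that `d_K(s_K, v) ≤ 2^r`. -/
noncomputable def rexp {V : Type*} (G : SimpleGraph V) (w : Sym2 V → ℕ) (s v : V) : ℕ :=
  sInf {r : ℕ | wdistN G w s v ≤ 2 ^ r}

/-- `T'(v) := max{2^{r_A(v)}, 2^{r_B(v)}}`. -/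
noncomputable def Texp {V : Type*} (G : SimpleGraph V) (wA wB : Sym2 V → ℕ) (sA sB v : V) : ℕ :=
  max (2 ^ rexp G wA sA v) (2 ^ rexp G wB sB v)

lemma rset_nonempty {V : Type*} (G : SimpleGraph V) (w : Sym2 V → ℕ) (s v : V) :
    {r : ℕ | wdistN G w s v ≤ 2 ^ r}.Nonempty :=
  ⟨wdistN G w s v, le_of_lt (Nat.lt_two_pow_self (n := _))⟩

lemma wdist_le_pow_rexp {V : Type*} (G : SimpleGraph V) (w : Sym2 V → ℕ) (s v : V) :
    wdistN G w s v ≤ 2 ^ rexp G w s v :=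
  Nat.sInf_mem (rset_nonempty G w s v)

lemma pow_rexp_le {V : Type*} (G : SimpleGraph V) (w : Sym2 V → ℕ) (s v : V)
    (h : 1 ≤ wdistN G w s v) : 2 ^ rexp G w s v ≤ 2 * wdistN G w s v := by
  rcases Nat.eq_zero_or_pos (rexp G w s v) with h0 | hp
  · rw [h0]; omega
  · obtain ⟨k, hk⟩ := Nat.exists_eq_succ_of_ne_zero hp.ne'
    have hnot : k ∉ {r : ℕ | wdistN G w s v ≤ 2 ^ r} :=
      Nat.notMem_of_lt_sInf (show k < rexp G w s v by omega)
    simp only [Set.mem_setOf_eq, not_le] at hnot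
    rw [hk, pow_succ]
    omega

lemma wdist_zero_eq {V : Type*} (G : SimpleGraph V) (hconn : G.Connected)
    (w : Sym2 V → ℕ) (hpos : ∀ e ∈ G.edgeSet, 0 < w e) (s v : V)
    (h : wdistN G w s v = 0) : s = v := by
  have hne : (Set.range fun p : G.Walk s v => (p.edges.map w).sum).Nonempty :=
    ⟨_, ⟨(hconn s v).some, rfl⟩⟩
  have hmem := Nat.sInf_mem hne
  rw [show sInf _ = wdistN G w s v from rfl, h] at hmem
  obtain ⟨p, hp⟩ := hmem
  have hp' : (p.edges.map w).sum = 0 := hp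
  have hedges : p.edges = [] := by
    by_contra hnil
    obtain ⟨e, he⟩ := List.exists_mem_of_ne_nil _ hnil
    have : 0 < w e := hpos e (p.edges_subset_edgeSet he)
    have hle : w e ≤ (p.edges.map w).sum := List.single_le_sum (by simp) _ (List.mem_map_of_mem (f := w) he)
    omega
  have : p.length = 0 := by
    have := p.length_edges
    rw [hedges] at this
    simpa using this.symm
  exact p.eq_of_length_eq_zero this

/-- If `v_ρ` minimizes `T'` over all nodes, then `T_RV(v_ρ) ≤ 2 · min_{u ∈ V} T_RV(u)`,
where `T_RV(v) = max{d_A(s_A,v), d_B(s_B,v)}`. -/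
theorem stmt_3 {V : Type*} [Fintype V] (G : SimpleGraph V) (hconn : G.Connected)
    (wA wB : Sym2 V → ℕ)
    (hposA : ∀ e ∈ G.edgeSet, 0 < wA e) (hposB : ∀ e ∈ G.edgeSet, 0 < wB e)
    (sA sB : V) (hne : sA ≠ sB)
    (vρ : V) (hρ : ∀ v : V, Texp G wA wB sA sB vρ ≤ Texp G wA wB sA sB v) :
    ∀ u : V, max (wdistN G wA sA vρ) (wdistN G wB sB vρ)
        ≤ 2 * max (wdistN G wA sA u) (wdistN G wB sB u) := by
  intro u
  have h1 : max (wdistN G wA sA vρ) (wdistN G wB sB vρ) ≤ Texp G wA wB sA sB vρ :=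
    max_le_max (wdist_le_pow_rexp G wA sA vρ) (wdist_le_pow_rexp G wB sB vρ)
  have hpos : 1 ≤ max (wdistN G wA sA u) (wdistN G wB sB u) := by
    by_contra h
    push_neg at h
    have hA0 : wdistN G wA sA u = 0 := by omega
    have hB0 : wdistN G wB sB u = 0 := by omega
    exact hne ((wdist_zero_eq G hconn wA hposA sA u hA0).trans
      (wdist_zero_eq G hconn wB hposB sB u hB0).symm)
  have h2 : Texp G wA wB sA sB u ≤ 2 * max (wdistN G wA sA u) (wdistN G wB sB u) := by
    apply max_le
    · rcases Nat.eq_zero_or_pos (wdistN G wA sA u) with h0 | hp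
      · have : rexp G wA sA u = 0 := by
          apply Nat.eq_zero_of_le_zero
          apply Nat.sInf_le
          simp [h0]
        rw [this]; omega
      · calc 2 ^ rexp G wA sA u ≤ 2 * wdistN G wA sA u := pow_rexp_le G wA sA u hp
          _ ≤ _ := by gcongr; exact le_max_left _ _
    · rcases Nat.eq_zero_or_pos (wdistN G wB sB u) with h0 | hp
      · have : rexp G wB sB u = 0 := by
          apply Nat.eq_zero_of_le_zero
          apply Nat.sInf_le
          simp [h0]
        rw [this]; omega
      · calc 2 ^ rexp G wB sB u ≤ 2 * wdistN G wB sB u := pow_rexp_le G wB sB u hp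
          _ ≤ _ := by gcongr; exact le_max_right _ _
  exact h1.trans ((hρ u).trans h2)
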